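/- Contrapositive model-rejection criterion: Let A ∈ ℝ^{m×n}, b ∈ ℝ^m, Ã ∈ ℝ^{m×n}, b̃ ∈ ℝ^m. If σ_{n+1}([Ã, b̃]) > ‖Ã − A‖ + ‖b̃ − b‖, then the linear system A κ = b has no solution. -/

import Mathlib

/-- Spectral (operator) norm of a real matrix, w.r.t. Euclidean norms. -/
noncomputable def specNorm {m n : ℕ} (A : Matrix (Fin m) (Fin n) ℝ) : ℝ :=
  ‖LinearMap.toContinuousLinearMap (Matrix.toEuclideanLin A)‖

/-- The `k`-th largest singular value (1-indexed), characterized via best low-rank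
approximation (Eckart–Young): `σ_k(A) = inf { ‖A - B‖ : rank B < k }`.
This convention automatically extends the singular values by zero beyond `min m n`. -/
noncomputable def sv {m n : ℕ} (A : Matrix (Fin m) (Fin n) ℝ) (k : ℕ) : ℝ :=
  sInf { c | ∃ B : Matrix (Fin m) (Fin n) ℝ, B.rank < k ∧ c = specNorm (A - B) }


/-- The augmented matrix `[A, b]` obtained by appending the column `b` to `A`. -/
def aug {m n : ℕ} (A : Matrix (Fin m) (Fin n) ℝ) (b : Fin m → ℝ) :
    Matrix (Fin m) (Fin (n + 1)) ℝ :=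
  Matrix.of fun i => Fin.snoc (A i) (b i)

/-- Euclidean norm of a vector. -/
noncomputable def vecNorm {m : ℕ} (b : Fin m → ℝ) : ℝ := Real.sqrt (∑ i, b i ^ 2)

lemma specNorm_nonneg {m n : ℕ} (A : Matrix (Fin m) (Fin n) ℝ) : 0 ≤ specNorm A :=
  norm_nonneg _

lemma vecNorm_nonneg {m : ℕ} (b : Fin m → ℝ) : 0 ≤ vecNorm b := Real.sqrt_nonneg _

lemma aug_mulVec {m n : ℕ} (E : Matrix (Fin m) (Fin n) ℝ) (e : Fin m → ℝ)
    (v : Fin (n + 1) → ℝ) :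
    (aug E e).mulVec v = E.mulVec (fun j => v j.castSucc) + v (Fin.last n) • e := by
  funext i
  simp [Matrix.mulVec, dotProduct, aug, Fin.sum_univ_castSucc, mul_comm]

lemma aug_sub {m n : ℕ} (A A' : Matrix (Fin m) (Fin n) ℝ) (b b' : Fin m → ℝ) :
    aug A b - aug A' b' = aug (A - A') (b - b') := by
  funext i j
  refine Fin.lastCases ?_ ?_ j <;>
    simp [aug, Matrix.sub_apply, Fin.snoc_last, Fin.snoc_castSucc]

lemma rank_aug_le {m n : ℕ} (A : Matrix (Fin m) (Fin n) ℝ) (b : Fin m → ℝ)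
    (κ : Fin n → ℝ) (hκ : A.mulVec κ = b) : (aug A b).rank ≤ n := by
  have hle : LinearMap.range (aug A b).mulVecLin ≤ LinearMap.range A.mulVecLin := by
    rintro x ⟨v, rfl⟩
    refine ⟨(fun j => v j.castSucc) + v (Fin.last n) • κ, ?_⟩
    simp only [Matrix.mulVecLin_apply, aug_mulVec, ← hκ]
    rw [Matrix.mulVec_add, Matrix.mulVec_smul]
  have := Submodule.finrank_mono hle
  exact le_trans this (Matrix.rank_le_width A)

lemma sq_le_norm_sq {k : ℕ} (x : EuclideanSpace ℝ (Fin k)) (i : Fin k) :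
    |x i| ≤ ‖x‖ := by
  rw [EuclideanSpace.norm_eq]
  rw [← Real.sqrt_sq_eq_abs]
  apply Real.sqrt_le_sqrt
  have : (x i)^2 = ‖x i‖^2 := by rw [Real.norm_eq_abs, sq_abs]
  rw [this]
  exact Finset.single_le_sum (f := fun i => ‖x i‖^2) (fun j _ => sq_nonneg _)
    (Finset.mem_univ i)

lemma specNorm_aug_le {m n : ℕ} (E : Matrix (Fin m) (Fin n) ℝ) (e : Fin m → ℝ) :
    specNorm (aug E e) ≤ specNorm E + vecNorm e := by
  apply ContinuousLinearMap.opNorm_le_bound _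
    (add_nonneg (specNorm_nonneg E) (vecNorm_nonneg e))
  intro x
  have hx : (LinearMap.toContinuousLinearMap (Matrix.toEuclideanLin (aug E e))) x
      = Matrix.toEuclideanLin (aug E e) x := rfl
  rw [hx, Matrix.toEuclideanLin_apply]
  set v : Fin (n + 1) → ℝ := (WithLp.equiv 2 (Fin (n + 1) → ℝ)) x with hv
  rw [aug_mulVec]
  set v' : EuclideanSpace ℝ (Fin n) :=
    (WithLp.equiv 2 (Fin n → ℝ)).symm (fun j => v j.castSucc) with hv'
  have key : (WithLp.equiv 2 (Fin m → ℝ)).symm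
      (E.mulVec (fun j => v j.castSucc) + v (Fin.last n) • e)
      = Matrix.toEuclideanLin E v'
        + v (Fin.last n) • (WithLp.equiv 2 (Fin m → ℝ)).symm e := by
    rw [Matrix.toEuclideanLin_apply]
    rfl
  change ‖(WithLp.equiv 2 (Fin m → ℝ)).symm
      (E.mulVec (fun j => v j.castSucc) + v (Fin.last n) • e)‖ ≤ _
  rw [key]
  have hv'norm : ‖v'‖ ≤ ‖x‖ := by
    rw [EuclideanSpace.norm_eq, EuclideanSpace.norm_eq]
    apply Real.sqrt_le_sqrt
    have : ∀ i : Fin (n + 1), ‖x i‖^2 = ‖v i‖^2 := fun i => rfl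
    calc ∑ j : Fin n, ‖v' j‖^2 = ∑ j : Fin n, ‖v j.castSucc‖^2 := rfl
      _ ≤ ∑ j : Fin (n+1), ‖v j‖^2 := by
          rw [Fin.sum_univ_castSucc]
          exact le_add_of_nonneg_right (sq_nonneg _)
      _ = ∑ j : Fin (n+1), ‖x j‖^2 := rfl
  have h1 : ‖Matrix.toEuclideanLin E v'‖ ≤ specNorm E * ‖x‖ := by
    have := (LinearMap.toContinuousLinearMap (Matrix.toEuclideanLin E)).le_opNorm v'
    refine le_trans this ?_
    exact mul_le_mul_of_nonneg_left hv'norm (specNorm_nonneg E)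
  have h2 : ‖v (Fin.last n) • (WithLp.equiv 2 (Fin m → ℝ)).symm e‖
      ≤ vecNorm e * ‖x‖ := by
    rw [norm_smul]
    have he : ‖(WithLp.equiv 2 (Fin m → ℝ)).symm e‖ = vecNorm e := by
      rw [EuclideanSpace.norm_eq, vecNorm]
      congr 1
      refine Finset.sum_congr rfl fun i _ => ?_
      rw [Real.norm_eq_abs, sq_abs]
      rfl
    have hvl : ‖v (Fin.last n)‖ ≤ ‖x‖ := by
      rw [Real.norm_eq_abs]
      exact sq_le_norm_sq x (Fin.last n)
    rw [he]
    calc ‖v (Fin.last n)‖ * vecNorm e ≤ ‖x‖ * vecNorm e :=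
          mul_le_mul_of_nonneg_right hvl (vecNorm_nonneg e)
      _ = vecNorm e * ‖x‖ := mul_comm _ _
  calc ‖Matrix.toEuclideanLin E v' + v (Fin.last n) • (WithLp.equiv 2 (Fin m → ℝ)).symm e‖
      ≤ ‖Matrix.toEuclideanLin E v'‖
        + ‖v (Fin.last n) • (WithLp.equiv 2 (Fin m → ℝ)).symm e‖ := norm_add_le _ _
    _ ≤ specNorm E * ‖x‖ + vecNorm e * ‖x‖ := add_le_add h1 h2
    _ = (specNorm E + vecNorm e) * ‖x‖ := by ring

theorem model_rejection {m n : ℕ} (A Atil : Matrix (Fin m) (Fin n) ℝ)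
    (b btil : Fin m → ℝ)
    (h : sv (aug Atil btil) (n + 1) > specNorm (Atil - A) + vecNorm (btil - b)) :
    ¬ ∃ κ : Fin n → ℝ, A.mulVec κ = b := by
  rintro ⟨κ, hκ⟩
  have hrank : (aug A b).rank < n + 1 :=
    Nat.lt_succ_of_le (rank_aug_le A b κ hκ)
  have hmem : specNorm (aug Atil btil - aug A b) ∈
      { c | ∃ B : Matrix (Fin m) (Fin (n + 1)) ℝ, B.rank < n + 1 ∧ c = specNorm (aug Atil btil - B) } :=
    ⟨aug A b, hrank, rfl⟩
  have hbdd : BddBelow { c | ∃ B : Matrix (Fin m) (Fin (n + 1)) ℝ,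
      B.rank < n + 1 ∧ c = specNorm (aug Atil btil - B) } := by
    refine ⟨0, ?_⟩
    rintro c ⟨B, _, rfl⟩
    exact specNorm_nonneg _
  have hle : sv (aug Atil btil) (n + 1) ≤ specNorm (aug Atil btil - aug A b) :=
    csInf_le hbdd hmem
  rw [aug_sub] at hle
  have := le_trans hle (specNorm_aug_le (Atil - A) (btil - b))
  linarith
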